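/- For all integers n ≥ 0, r ≥ 1 and k ≥ 1, the following identity holds in ℚ[x]: binom(x-k, n) = ∑_{j=0}^{n} (-1)^{n-j} binom(n+(r-1)j+k-1, n-j) · G_j(x, r), where G_0(x, r) = 1 and G_j(x, r) = (x/j!)·∏_{ℓ=(r-1)j+1}^{rj-1} (x+ℓ) for j ≥ 1 are the Gould polynomials. -/

import Mathlib

open Polynomial

/-- The polynomial binomial coefficient `binom(y, r) = (1/r!)·∏_{ℓ=0}^{r-1} (y - ℓ)`. -/
noncomputable def polyChoose (y : Polynomial ℚ) (r : ℕ) : Polynomial ℚ :=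
  Polynomial.C ((r.factorial : ℚ)⁻¹) * ∏ ℓ ∈ Finset.range r, (y - Polynomial.C (ℓ : ℚ))

/-- The Gould polynomial `G_n(x, r) = (x/n!)·∏_{ℓ=(r-1)n+1}^{rn-1} (x+ℓ)` for `n ≥ 1`,
with `G_0(x, r) = 1`. -/
noncomputable def gouldPoly (r n : ℕ) : Polynomial ℚ :=
  if n = 0 then 1
  else Polynomial.C ((n.factorial : ℚ)⁻¹) * Polynomial.X *
    ∏ ℓ ∈ Finset.Icc ((r - 1) * n + 1) (r * n - 1), (Polynomial.X + Polynomial.C (ℓ : ℚ))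

open Finset

noncomputable def pc (x : ℚ) (n : ℕ) : ℚ := (n.factorial : ℚ)⁻¹ * ∏ ℓ ∈ Finset.range n, (x - ℓ)

noncomputable def gp (r n : ℕ) (x : ℚ) : ℚ :=
  if n = 0 then 1 else (n.factorial : ℚ)⁻¹ * x *
    ∏ ℓ ∈ Finset.Icc ((r - 1) * n + 1) (r * n - 1), (x + ℓ)

lemma pc_succ (x : ℚ) (n : ℕ) : pc x (n+1) = pc (x-1) (n+1) + pc (x-1) n := by
  unfold pc
  have h1 : ∏ ℓ ∈ range (n+1), (x - ℓ) = (∏ ℓ ∈ range n, (x - 1 - ℓ)) * x := by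
    rw [Finset.prod_range_succ']
    simp only [Nat.cast_zero, sub_zero, Nat.cast_add, Nat.cast_one]
    congr 1
    exact Finset.prod_congr rfl (fun i _ => by ring)
  have h2 : ∏ ℓ ∈ range (n+1), (x - 1 - ℓ) = (∏ ℓ ∈ range n, (x - 1 - ℓ)) * (x - 1 - n) := by
    rw [Finset.prod_range_succ]
  rw [h1, h2]
  have hf : ((n+1).factorial : ℚ) = (n+1) * n.factorial := by
    rw [Nat.factorial_succ]; push_cast; ring
  rw [hf]
  have h0 : (n.factorial : ℚ) ≠ 0 := Nat.cast_ne_zero.mpr (Nat.factorial_ne_zero n)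
  have h0' : (n : ℚ) + 1 ≠ 0 := by positivity
  field_simp
  ring

lemma prod_Icc_shift (f : ℕ → ℚ) (a m : ℕ) :
    ∏ ℓ ∈ Icc (a+1) (a+m), f ℓ = ∏ i ∈ range m, f (a+1+i) := by
  rw [← Finset.Ico_add_one_right_eq_Icc, Finset.prod_Ico_eq_prod_range]
  have : a + m + 1 - (a + 1) = m := by omega
  rw [this]

lemma gp_prod_range (s n : ℕ) (x : ℚ) (hn : n ≠ 0) :
    gp (s+1) n x = (n.factorial : ℚ)⁻¹ * x * ∏ i ∈ range (n-1), (x + (s*n + 1 + i : ℕ)) := by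
  unfold gp
  rw [if_neg hn]
  congr 1
  have e : (s+1) * n = s*n + n := by ring
  have h2 : (s+1-1) * n + 1 = s*n + 1 := by simp
  have h1 : (s+1) * n - 1 = s*n + (n-1) := by omega
  rw [h2, h1, prod_Icc_shift]

lemma gp_diff (s j : ℕ) (x : ℚ) :
    gp (s+1) (j+1) x - gp (s+1) (j+1) (x-1) = gp (s+1) j (x + s) := by
  cases j with
  | zero =>
    rw [gp_prod_range s 1 x (by omega), gp_prod_range s 1 (x-1) (by omega)]
    simp [gp]
  | succ t =>
    rw [gp_prod_range s (t+2) x (by omega), gp_prod_range s (t+2) (x-1) (by omega),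
      gp_prod_range s (t+1) (x+s) (by omega)]
    have hred1 : (t + 2) - 1 = t + 1 := by omega
    have hred2 : (t + 1) - 1 = t := by omega
    rw [hred1, hred2]
    set A := s * (t+2) with hA
    rw [Finset.prod_range_succ]
    have h2 : ∏ i ∈ range (t+1), (x - 1 + (A + 1 + i : ℕ)) =
        (∏ i ∈ range t, (x + (A + 1 + i : ℕ))) * (x - 1 + ((A+1:ℕ):ℚ)) := by
      rw [Finset.prod_range_succ']
      congr 1
      exact Finset.prod_congr rfl (fun i _ => by push_cast; ring)
    rw [h2]
    have h3 : ∏ i ∈ range t, (x + s + (s * (t+1) + 1 + i : ℕ)) =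
        ∏ i ∈ range t, (x + (A + 1 + i : ℕ)) := by
      exact Finset.prod_congr rfl (fun i _ => by rw [hA]; push_cast; ring)
    rw [h3]
    set Q := ∏ i ∈ range t, (x + (A + 1 + i : ℕ)) with hQ
    have hf : ((t+2).factorial : ℚ) = (t+2) * (t+1).factorial := by
      rw [Nat.factorial_succ]; push_cast; ring
    rw [hf]
    have h0 : ((t+1).factorial : ℚ) ≠ 0 := Nat.cast_ne_zero.mpr (Nat.factorial_ne_zero _)
    have h0' : (t : ℚ) + 2 ≠ 0 := by positivity
    have hlast : ((A + 1 + t : ℕ) : ℚ) = (A : ℚ) + 1 + t := by push_cast; ring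
    have hfirst : ((A + 1 : ℕ) : ℚ) = (A : ℚ) + 1 := by push_cast; ring
    have hAc : (A : ℚ) = s * (t+2) := by rw [hA]; push_cast; ring
    rw [hlast, hfirst, hAc]
    field_simp
    ring

lemma gp_zero' (r j : ℕ) (hj : j ≠ 0) : gp r j 0 = 0 := by
  unfold gp; rw [if_neg hj]; ring

lemma gp_zero (r : ℕ) (x : ℚ) : gp r 0 x = 1 := by simp [gp]

lemma pc_step (x : ℚ) (n : ℕ) : pc x (n+1) = ((n:ℚ)+1)⁻¹ * (x - n) * pc x n := by
  unfold pc
  rw [Finset.prod_range_succ, Nat.factorial_succ]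
  push_cast
  rw [mul_inv]
  ring

lemma pc_neg (k n : ℕ) : pc (-(k+1 : ℚ)) n = (-1)^n * ((n + k).choose n : ℚ) := by
  induction n with
  | zero => simp [pc]
  | succ n ih =>
    rw [pc_step, ih]
    have hch := Nat.add_one_mul_choose_eq (n + k) n
    have hch' : ((n:ℚ) + k + 1) * ((n + k).choose n : ℚ) = ((n + 1 + k).choose (n+1) : ℚ) * ((n:ℚ) + 1) := by
      have h2 : (n + k).succ.choose n.succ = (n + 1 + k).choose (n + 1) := by
        congr 1
        omega
      rw [h2] at hch
      exact_mod_cast congrArg (fun z : ℕ => (z : ℚ)) hch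
    have h0' : (n : ℚ) + 1 ≠ 0 := by positivity
    
    rw [pow_succ]
    field_simp
    linear_combination (-1:ℚ) * hch'

lemma main (s : ℕ) : ∀ n k m : ℕ,
    pc ((m : ℚ) - (k+1)) n
      = ∑ j ∈ Finset.range (n+1),
          (-1:ℚ)^(n-j) * (((n + s*j + k).choose (n-j)) : ℚ) * gp (s+1) j (m : ℚ) := by
  intro n
  induction n with
  | zero =>
    intro k m
    simp [pc, gp_zero]
  | succ n ihn =>
    intro k m
    induction m with
    | zero =>
      rw [Finset.sum_eq_single 0]
      · rw [Nat.cast_zero]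
        have : (0:ℚ) - (k+1) = -((k:ℚ)+1) := by ring
        rw [this, pc_neg, gp_zero]
        norm_num
      · intro b _ hb
        rw [Nat.cast_zero, gp_zero' _ _ hb]
        ring
      · intro h
        exact absurd (Finset.mem_range.mpr (by omega)) h
    | succ m ihm =>
      -- LHS step
      have hL : pc (((m+1:ℕ) : ℚ) - (k+1)) (n+1)
          = pc ((m:ℚ) - (k+1)) (n+1) + pc ((m:ℚ) - (k+1)) n := by
        have e1 : ((m+1:ℕ):ℚ) - (k+1) = ((m:ℚ) - (k+1)) + 1 := by push_cast; ring
        rw [e1, pc_succ]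
        simp [add_sub_cancel_right]
      -- RHS difference sum
      have hdiff : ∀ j : ℕ, gp (s+1) (j+1) (((m+1:ℕ)):ℚ) - gp (s+1) (j+1) (m:ℚ)
          = gp (s+1) j ((m:ℚ) + 1 + s) := by
        intro j
        have := gp_diff s j ((m:ℚ) + 1)
        have e : (m:ℚ) + 1 - 1 = m := by ring
        rw [e] at this
        rw [show (((m+1:ℕ)):ℚ) = (m:ℚ) + 1 by push_cast; ring]
        exact this
      have hR : ∑ j ∈ range (n+2),
            (-1:ℚ)^(n+1-j) * (((n+1 + s*j + k).choose (n+1-j)) : ℚ) * gp (s+1) j (((m+1:ℕ)):ℚ)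
          = (∑ j ∈ range (n+2),
              (-1:ℚ)^(n+1-j) * (((n+1 + s*j + k).choose (n+1-j)) : ℚ) * gp (s+1) j (m:ℚ))
            + ∑ i ∈ range (n+1),
              (-1:ℚ)^(n-i) * (((n + s*i + (k+s+1)).choose (n-i)) : ℚ) * gp (s+1) i ((m:ℚ)+1+s) := by
        rw [← sub_eq_iff_eq_add']
        rw [← Finset.sum_sub_distrib]
        have e0 : ∀ j ∈ range (n+2),
            ((-1:ℚ)^(n+1-j) * (((n+1 + s*j + k).choose (n+1-j)) : ℚ) * gp (s+1) j (((m+1:ℕ)):ℚ)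
            - (-1:ℚ)^(n+1-j) * (((n+1 + s*j + k).choose (n+1-j)) : ℚ) * gp (s+1) j (m:ℚ))
            = (-1:ℚ)^(n+1-j) * (((n+1 + s*j + k).choose (n+1-j)) : ℚ)
              * (gp (s+1) j (((m+1:ℕ)):ℚ) - gp (s+1) j (m:ℚ)) := by
          intro j _; ring
        rw [Finset.sum_congr rfl e0, Finset.sum_range_succ']
        have hz : (-1:ℚ)^(n+1-0) * (((n+1 + s*0 + k).choose (n+1-0)) : ℚ)
              * (gp (s+1) 0 (((m+1:ℕ)):ℚ) - gp (s+1) 0 (m:ℚ)) = 0 := by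
          rw [gp_zero, gp_zero]; ring
        rw [hz, add_zero]
        apply Finset.sum_congr rfl
        intro i _
        rw [hdiff i]
        have e1 : n + 1 - (i+1) = n - i := by omega
        have e2 : n + 1 + s*(i+1) + k = n + s*i + (k+s+1) := by ring
        rw [e1, e2]
      rw [hL, hR, ihm]
      congr 1
      have := ihn (k+s+1) (m+1+s)
      have e3 : ((m+1+s:ℕ):ℚ) - ((k+s+1:ℕ)+1) = (m:ℚ) - (k+1) := by push_cast; ring
      have e4 : ((m+1+s:ℕ):ℚ) = (m:ℚ)+1+s := by push_cast; ring
      rw [e3, e4] at this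
      exact this

lemma eval_polyChoose (p : Polynomial ℚ) (n : ℕ) (x : ℚ) :
    (polyChoose p n).eval x = pc (p.eval x) n := by
  unfold polyChoose pc
  simp [Polynomial.eval_prod]

lemma eval_gould (r j : ℕ) (x : ℚ) : (gouldPoly r j).eval x = gp r j x := by
  unfold gouldPoly gp
  by_cases hj : j = 0
  · simp [hj]
  · rw [if_neg hj, if_neg hj]
    simp [Polynomial.eval_prod]

theorem stmt_10 (n r k : ℕ) (hr : 1 ≤ r) (hk : 1 ≤ k) :
    polyChoose (Polynomial.X - Polynomial.C (k : ℚ)) n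
      = ∑ j ∈ Finset.range (n + 1),
          Polynomial.C ((-1 : ℚ) ^ (n - j) * (Nat.choose (n + (r - 1) * j + k - 1) (n - j) : ℚ)) *
            gouldPoly r j := by
  obtain ⟨s, rfl⟩ : ∃ s, r = s + 1 := ⟨r - 1, by omega⟩
  obtain ⟨k', rfl⟩ : ∃ k', k = k' + 1 := ⟨k - 1, by omega⟩
  apply Polynomial.eq_of_infinite_eval_eq
  apply Set.Infinite.mono (s := Set.range (Nat.cast : ℕ → ℚ))
  · rintro x ⟨m, rfl⟩
    show _ = _
    rw [eval_polyChoose, Polynomial.eval_finset_sum]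
    have hcoeff : ∀ j, n + (s + 1 - 1) * j + (k' + 1) - 1 = n + s * j + k' := by
      intro j; have hs : s + 1 - 1 = s := rfl; rw [hs]; omega
    have e : ((Polynomial.X : Polynomial ℚ) - Polynomial.C ((k' + 1 : ℕ) : ℚ)).eval ((m : ℕ) : ℚ)
        = (m : ℚ) - ((k' : ℚ) + 1) := by
      rw [Polynomial.eval_sub, Polynomial.eval_X, Polynomial.eval_C]
      push_cast
      ring
    rw [e, main s n k' m]
    apply Finset.sum_congr rfl
    intro j _
    rw [Polynomial.eval_mul, Polynomial.eval_C, eval_gould, hcoeff j]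
  · exact Set.infinite_range_of_injective Nat.cast_injective
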